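/- For 2 ≤ m and the 2-homogeneous polynomial P(x) = Σ_j j^{-α} x_j² on ℓ² with α = 1/2 + ε, 0 < ε < 1/2: the linearization Ψ₁(P̌) : ℓ² → (ℓ²)' ≅ ℓ² of the associated symmetric bilinear form P̌(x,y) = Σ_j j^{-α}x_j y_j is the diagonal operator (x_j) ↦ (j^{-α}x_j), which is absolutely 1-summing; hence P is of type [as,1] while P is not 1-dominated. In particular the class of polynomials of type [as,1] strictly contains the class of 1-dominated polynomials on ℓ². -/

import Mathlib

open MeasureTheory

/-- The closed unit ball of the dual of `E`, with the weak-star topology. -/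
def dualBall (𝕜 E : Type) [RCLike 𝕜] [NormedAddCommGroup E] [NormedSpace 𝕜 E] :
    Set (WeakDual 𝕜 E) := {φ | ∀ x, ‖φ x‖ ≤ ‖x‖}

noncomputable instance (𝕜 E : Type) [RCLike 𝕜] [NormedAddCommGroup E] [NormedSpace 𝕜 E] :
    MeasurableSpace (dualBall 𝕜 E) := borel _

/-- `P` is a 1-dominated `m`-homogeneous polynomial: there are `C ≥ 0` and a regular Borel
probability measure `μ` on the dual unit ball (weak-star topology) with
`‖P x‖ ≤ C * (∫ |φ x| dμ)^m`. -/
def IsDominated1 (𝕜 : Type) [RCLike 𝕜] {E F : Type} [NormedAddCommGroup E] [NormedSpace 𝕜 E]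
    [NormedAddCommGroup F] [NormedSpace 𝕜 F] (m : ℕ) (P : E → F) : Prop :=
  ∃ (C : ℝ) (μ : Measure (dualBall 𝕜 E)), 0 ≤ C ∧ IsProbabilityMeasure μ ∧ μ.Regular ∧
    ∀ x, ‖P x‖ ≤ C * (∫ φ, ‖(φ : WeakDual 𝕜 E) x‖ ∂μ) ^ m

/-- `u` is absolutely 1-summing: `Σ ‖u x_j‖ ≤ C · sup_{‖φ‖≤1} Σ |φ x_j|` for all finite
families (the supremum is encoded by quantifying over all upper bounds `r`). -/
def IsSumming1 (𝕜 : Type) [RCLike 𝕜] {E F : Type} [NormedAddCommGroup E] [NormedSpace 𝕜 E]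
    [NormedAddCommGroup F] [NormedSpace 𝕜 F] (u : E → F) : Prop :=
  ∃ C : ℝ, 0 ≤ C ∧ ∀ (k : ℕ) (x : Fin k → E) (r : ℝ),
    (∀ φ : E →L[𝕜] 𝕜, ‖φ‖ ≤ 1 → ∑ j, ‖φ (x j)‖ ≤ r) → ∑ j, ‖u (x j)‖ ≤ C * r


open Finset RCLike

section Khintchine
variable {𝕜 : Type} [RCLike 𝕜]

local notation "⟪" x ", " y "⟫" => @inner 𝕜 _ _ x y

private lemma quad_ineq (z b : 𝕜) :
    ‖z + b‖ ^ 2 * ‖z + b‖ ^ 2 + ‖z - b‖ ^ 2 * ‖z - b‖ ^ 2 ≤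
      2 * ‖z‖ ^ 4 + 12 * ‖z‖ ^ 2 * ‖b‖ ^ 2 + 2 * ‖b‖ ^ 4 := by
  have h1 := norm_add_sq (𝕜 := 𝕜) z b
  have h2 := norm_sub_sq (𝕜 := 𝕜) z b
  have h3 : |re ⟪z, b⟫| ≤ ‖z‖ * ‖b‖ :=
    (abs_re_le_norm _).trans (norm_inner_le_norm z b)
  have h4 : (re ⟪z, b⟫) ^ 2 ≤ (‖z‖ * ‖b‖) ^ 2 := by
    have := abs_nonneg (re ⟪z, b⟫)
    nlinarith [sq_abs (re ⟪z, b⟫)]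
  nlinarith [sq_nonneg (‖z‖ * ‖b‖), sq_nonneg (re ⟪z, b⟫)]

/-- The signed sum `∑_{n ∈ F} ±(a n)`, with sign `+` when `n ∈ t`. -/
private def sgnSum (a : ℕ → 𝕜) (F t : Finset ℕ) : 𝕜 :=
  ∑ n ∈ F, (if n ∈ t then (1 : 𝕜) else -1) * a n

private lemma sgnSum_insert_not_mem (a : ℕ → 𝕜) {x : ℕ} {F : Finset ℕ} (hx : x ∉ F)
    {t : Finset ℕ} (ht : t ⊆ F) :
    sgnSum a (insert x F) t = sgnSum a F t - a x := by
  unfold sgnSum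
  rw [Finset.sum_insert hx, if_neg (fun h => hx (ht h))]
  ring

private lemma sgnSum_insert_mem (a : ℕ → 𝕜) {x : ℕ} {F : Finset ℕ} (hx : x ∉ F)
    {t : Finset ℕ} (ht : t ⊆ F) :
    sgnSum a (insert x F) (insert x t) = sgnSum a F t + a x := by
  unfold sgnSum
  rw [Finset.sum_insert hx, if_pos (Finset.mem_insert_self x t)]
  rw [add_comm, one_mul]
  congr 1
  refine Finset.sum_congr rfl fun n hn => ?_
  have hnx : n ≠ x := fun h => hx (h ▸ hn)
  simp [Finset.mem_insert, hnx]

private lemma moment2 (a : ℕ → 𝕜) (F : Finset ℕ) :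
    ∑ t ∈ F.powerset, ‖sgnSum a F t‖ ^ 2 = 2 ^ F.card * ∑ n ∈ F, ‖a n‖ ^ 2 := by
  classical
  induction F using Finset.induction_on with
  | empty => simp [sgnSum]
  | insert x F hx ih =>
    rw [Finset.sum_powerset_insert hx, Finset.card_insert_of_notMem hx,
      Finset.sum_insert hx]
    have key : ∀ t ∈ F.powerset,
        ‖sgnSum a (insert x F) t‖ ^ 2 + ‖sgnSum a (insert x F) (insert x t)‖ ^ 2
          = 2 * (‖sgnSum a F t‖ ^ 2 + ‖a x‖ ^ 2) := by
      intro t ht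
      rw [sgnSum_insert_not_mem a hx (Finset.mem_powerset.1 ht),
        sgnSum_insert_mem a hx (Finset.mem_powerset.1 ht)]
      have := parallelogram_law_with_norm 𝕜 (sgnSum a F t) (a x)
      nlinarith [this]
    calc (∑ t ∈ F.powerset, ‖sgnSum a (insert x F) t‖ ^ 2) +
          ∑ t ∈ F.powerset, ‖sgnSum a (insert x F) (insert x t)‖ ^ 2
        = ∑ t ∈ F.powerset, (‖sgnSum a (insert x F) t‖ ^ 2 +
            ‖sgnSum a (insert x F) (insert x t)‖ ^ 2) := by
          rw [Finset.sum_add_distrib]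
      _ = ∑ t ∈ F.powerset, 2 * (‖sgnSum a F t‖ ^ 2 + ‖a x‖ ^ 2) :=
          Finset.sum_congr rfl key
      _ = 2 ^ (F.card + 1) * (‖a x‖ ^ 2 + ∑ n ∈ F, ‖a n‖ ^ 2) := by
          simp only [mul_add]
          rw [Finset.sum_add_distrib, ← Finset.mul_sum, ih, Finset.sum_const,
            Finset.card_powerset, nsmul_eq_mul]
          push_cast
          ring

private lemma moment4 (a : ℕ → 𝕜) (F : Finset ℕ) :
    ∑ t ∈ F.powerset, ‖sgnSum a F t‖ ^ 4 ≤
      3 * 2 ^ F.card * (∑ n ∈ F, ‖a n‖ ^ 2) ^ 2 := by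
  classical
  induction F using Finset.induction_on with
  | empty => simp [sgnSum]
  | insert x F hx ih =>
    have hA : (0:ℝ) ≤ ∑ n ∈ F, ‖a n‖ ^ 2 :=
      Finset.sum_nonneg fun n _ => sq_nonneg _
    rw [Finset.sum_powerset_insert hx, Finset.card_insert_of_notMem hx,
      Finset.sum_insert hx]
    have key : ∀ t ∈ F.powerset,
        ‖sgnSum a (insert x F) t‖ ^ 4 + ‖sgnSum a (insert x F) (insert x t)‖ ^ 4
          ≤ 2 * ‖sgnSum a F t‖ ^ 4 + 12 * ‖sgnSum a F t‖ ^ 2 * ‖a x‖ ^ 2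
            + 2 * ‖a x‖ ^ 4 := by
      intro t ht
      rw [sgnSum_insert_not_mem a hx (Finset.mem_powerset.1 ht),
        sgnSum_insert_mem a hx (Finset.mem_powerset.1 ht)]
      have := quad_ineq (sgnSum a F t) (a x)
      nlinarith [this]
    have hsum : (∑ t ∈ F.powerset, ‖sgnSum a (insert x F) t‖ ^ 4) +
          ∑ t ∈ F.powerset, ‖sgnSum a (insert x F) (insert x t)‖ ^ 4
        ≤ ∑ t ∈ F.powerset, (2 * ‖sgnSum a F t‖ ^ 4
            + 12 * ‖sgnSum a F t‖ ^ 2 * ‖a x‖ ^ 2 + 2 * ‖a x‖ ^ 4) := by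
      rw [← Finset.sum_add_distrib]
      exact Finset.sum_le_sum key
    refine hsum.trans ?_
    have hm : ∑ t ∈ F.powerset, 12 * ‖sgnSum a F t‖ ^ 2 * ‖a x‖ ^ 2
        = 12 * ‖a x‖ ^ 2 * (2 ^ F.card * ∑ n ∈ F, ‖a n‖ ^ 2) := by
      rw [← moment2, Finset.mul_sum]
      exact Finset.sum_congr rfl fun t _ => by ring
    have expand : ∑ t ∈ F.powerset, (2 * ‖sgnSum a F t‖ ^ 4
            + 12 * ‖sgnSum a F t‖ ^ 2 * ‖a x‖ ^ 2 + 2 * ‖a x‖ ^ 4)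
        = 2 * (∑ t ∈ F.powerset, ‖sgnSum a F t‖ ^ 4)
          + 12 * ‖a x‖ ^ 2 * (2 ^ F.card * ∑ n ∈ F, ‖a n‖ ^ 2)
          + 2 ^ F.card * (2 * ‖a x‖ ^ 4) := by
      rw [Finset.sum_add_distrib, Finset.sum_add_distrib, ← Finset.mul_sum, hm,
        Finset.sum_const, Finset.card_powerset, nsmul_eq_mul]
      push_cast
      ring
    rw [expand]
    have h2c : (0:ℝ) < 2 ^ F.card := by positivity
    have h2s : (2:ℝ) ^ (F.card + 1) = 2 * 2 ^ F.card := by ring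
    rw [h2s]
    nlinarith [ih, mul_nonneg h2c.le (sq_nonneg (‖a x‖ ^ 2))]

private lemma khintchine (a : ℕ → 𝕜) (F : Finset ℕ) :
    (2:ℝ) ^ F.card * Real.sqrt (∑ n ∈ F, ‖a n‖ ^ 2) ≤
      Real.sqrt 3 * ∑ t ∈ F.powerset, ‖sgnSum a F t‖ := by
  classical
  set A := ∑ n ∈ F, ‖a n‖ ^ 2 with hAdef
  have hA : 0 ≤ A := Finset.sum_nonneg fun n _ => sq_nonneg _
  set T1 := ∑ t ∈ F.powerset, ‖sgnSum a F t‖ with hT1def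
  have hT1 : 0 ≤ T1 := Finset.sum_nonneg fun t _ => norm_nonneg _
  rcases eq_or_lt_of_le hA with hA0 | hA0
  · rw [← hA0, Real.sqrt_zero, mul_zero]
    positivity
  set T2 := ∑ t ∈ F.powerset, ‖sgnSum a F t‖ ^ 2 with hT2def
  set T3 := ∑ t ∈ F.powerset, ‖sgnSum a F t‖ ^ 3 with hT3def
  set T4 := ∑ t ∈ F.powerset, ‖sgnSum a F t‖ ^ 4 with hT4def
  have hT3 : 0 ≤ T3 := Finset.sum_nonneg fun t _ => by positivity
  have hm2 : T2 = 2 ^ F.card * A := moment2 a F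
  have hm4 : T4 ≤ 3 * 2 ^ F.card * A ^ 2 := moment4 a F
  have hCS1 : T2 ^ 2 ≤ T1 * T3 := by
    have h := sum_mul_sq_le_sq_mul_sq F.powerset
      (fun t => Real.sqrt ‖sgnSum a F t‖)
      (fun t => ‖sgnSum a F t‖ * Real.sqrt ‖sgnSum a F t‖)
    have e1 : ∀ t ∈ F.powerset, Real.sqrt ‖sgnSum a F t‖ *
        (‖sgnSum a F t‖ * Real.sqrt ‖sgnSum a F t‖) = ‖sgnSum a F t‖ ^ 2 := by
      intro t _
      rw [show Real.sqrt ‖sgnSum a F t‖ * (‖sgnSum a F t‖ * Real.sqrt ‖sgnSum a F t‖)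
        = (Real.sqrt ‖sgnSum a F t‖ * Real.sqrt ‖sgnSum a F t‖) * ‖sgnSum a F t‖ by ring,
        Real.mul_self_sqrt (norm_nonneg _)]
      ring
    have e2 : ∀ t ∈ F.powerset, (Real.sqrt ‖sgnSum a F t‖) ^ 2 = ‖sgnSum a F t‖ :=
      fun t _ => Real.sq_sqrt (norm_nonneg _)
    have e3 : ∀ t ∈ F.powerset, (‖sgnSum a F t‖ * Real.sqrt ‖sgnSum a F t‖) ^ 2
        = ‖sgnSum a F t‖ ^ 3 := by
      intro t _
      rw [mul_pow, Real.sq_sqrt (norm_nonneg _)]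
      ring
    rw [Finset.sum_congr rfl e1, Finset.sum_congr rfl e2, Finset.sum_congr rfl e3] at h
    exact h
  have hCS2 : T3 ^ 2 ≤ T2 * T4 := by
    have h := sum_mul_sq_le_sq_mul_sq F.powerset
      (fun t => ‖sgnSum a F t‖) (fun t => ‖sgnSum a F t‖ ^ 2)
    have e1 : ∀ t ∈ F.powerset, ‖sgnSum a F t‖ * ‖sgnSum a F t‖ ^ 2
        = ‖sgnSum a F t‖ ^ 3 := fun t _ => by ring
    have e3 : ∀ t ∈ F.powerset, (‖sgnSum a F t‖ ^ 2) ^ 2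
        = ‖sgnSum a F t‖ ^ 4 := fun t _ => by ring
    rw [Finset.sum_congr rfl e1, Finset.sum_congr rfl e3] at h
    exact h
  have h2c : (0:ℝ) < 2 ^ F.card := by positivity
  have hkey : (2:ℝ) ^ (2 * F.card) * A ≤ 3 * T1 ^ 2 := by
    have hT2pos : 0 < T2 := by rw [hm2]; positivity
    have h1 : T2 ^ 4 ≤ T1 ^ 2 * (T2 * T4) := by
      calc T2 ^ 4 = (T2 ^ 2) ^ 2 := by ring
        _ ≤ (T1 * T3) ^ 2 := by
            apply pow_le_pow_left₀ (by positivity) hCS1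
        _ = T1 ^ 2 * T3 ^ 2 := by ring
        _ ≤ T1 ^ 2 * (T2 * T4) := by
            apply mul_le_mul_of_nonneg_left hCS2 (by positivity)
    have h2 : T2 ^ 3 ≤ T1 ^ 2 * T4 :=
      le_of_mul_le_mul_right (by
        calc T2 ^ 3 * T2 = T2 ^ 4 := by ring
          _ ≤ T1 ^ 2 * (T2 * T4) := h1
          _ = T1 ^ 2 * T4 * T2 := by ring) hT2pos
    have h3 : T2 ^ 3 ≤ T1 ^ 2 * (3 * 2 ^ F.card * A ^ 2) :=
      h2.trans (mul_le_mul_of_nonneg_left hm4 (sq_nonneg T1))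
    rw [hm2] at h3
    have hApos : 0 < A := hA0
    have hpm : (2:ℝ) ^ (2 * F.card) = (2 ^ F.card) ^ 2 := by rw [pow_mul']
    rw [hpm]
    nlinarith [h3, mul_pos h2c (mul_pos hApos hApos), sq_nonneg T1]
  calc (2:ℝ) ^ F.card * Real.sqrt A = Real.sqrt ((2 ^ F.card) ^ 2 * A) := by
        rw [Real.sqrt_mul (by positivity), Real.sqrt_sq h2c.le]
    _ = Real.sqrt (2 ^ (2 * F.card) * A) := by rw [← pow_mul]; ring_nf
    _ ≤ Real.sqrt (3 * T1 ^ 2) := Real.sqrt_le_sqrt hkey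
    _ = Real.sqrt 3 * T1 := by
        rw [Real.sqrt_mul (by norm_num), Real.sqrt_sq hT1]

end Khintchine

open scoped ENNReal NNReal
section LpHelpers
variable {𝕜 : Type} [RCLike 𝕜]

private lemma toReal_two_pow (y : ℝ) : y ^ (2:ℝ≥0∞).toReal = y ^ 2 := by
  rw [show (2:ℝ≥0∞).toReal = ((2:ℕ):ℝ) by norm_num, Real.rpow_natCast]

private lemma memℓp_two_of_le {f : ∀ _ : ℕ, 𝕜} (x : lp (fun _ : ℕ => 𝕜) 2)
    (hf : ∀ n, ‖f n‖ ≤ ‖(x : ∀ _ : ℕ, 𝕜) n‖) : Memℓp f 2 := by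
  apply memℓp_gen
  have hx := (lp.memℓp x).summable (by norm_num : 0 < (2:ℝ≥0∞).toReal)
  refine Summable.of_nonneg_of_le (fun n => Real.rpow_nonneg (norm_nonneg _) _)
    (fun n => ?_) hx
  exact Real.rpow_le_rpow (norm_nonneg _) (hf n) (by norm_num)

private lemma lp_norm_sq (x : lp (fun _ : ℕ => 𝕜) 2) :
    ‖x‖ ^ 2 = ∑' n, ‖(x : ∀ _ : ℕ, 𝕜) n‖ ^ 2 := by
  have h := lp.norm_rpow_eq_tsum (by norm_num : 0 < (2:ℝ≥0∞).toReal) x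
  rw [toReal_two_pow] at h
  rw [h]
  exact tsum_congr fun n => toReal_two_pow _

private lemma norm_sum_single_sq (f : ℕ → 𝕜) (F : Finset ℕ) :
    ‖∑ n ∈ F, lp.single (E := fun _ : ℕ => 𝕜) 2 n (f n)‖ ^ 2 = ∑ n ∈ F, ‖f n‖ ^ 2 := by
  have h := lp.norm_sum_single (p := 2) (by norm_num : 0 < (2:ℝ≥0∞).toReal) f F
  rw [toReal_two_pow] at h
  rw [h]
  exact Finset.sum_congr rfl fun n _ => toReal_two_pow _

private lemma inner_sum_single (f : ℕ → 𝕜) (F : Finset ℕ) (x : lp (fun _ : ℕ => 𝕜) 2) :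
    (inner 𝕜 (∑ n ∈ F, lp.single (E := fun _ : ℕ => 𝕜) 2 n (f n)) x : 𝕜)
      = ∑ n ∈ F, (starRingEnd 𝕜) (f n) * (x : ∀ _ : ℕ, 𝕜) n := by
  rw [sum_inner]
  exact Finset.sum_congr rfl fun n _ => by
    rw [lp.inner_single_left, RCLike.inner_apply']

end LpHelpers

open Filter

instance (𝕜 E : Type) [RCLike 𝕜] [NormedAddCommGroup E] [NormedSpace 𝕜 E] :
    BorelSpace (dualBall 𝕜 E) := ⟨rfl⟩


set_option maxHeartbeats 2000000

/-- For the 2-homogeneous polynomial `P(x) = Σ_j (j+1)^{-α} x_j²` on `ℓ²` with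
`α = 1/2 + ε`, `0 < ε < 1/2`: the linearization `Ψ₁(P̌)` of its symmetric bilinear form is
absolutely 1-summing (so `P` is of type `[as,1]`), while `P` is not 1-dominated. Hence the
class of polynomials of type `[as,1]` strictly contains the 1-dominated polynomials. -/
theorem type_as_one_not_dominated {𝕜 : Type} [RCLike 𝕜]
    (ε : ℝ) (hε0 : 0 < ε) (hε : ε < 1 / 2) (α : ℝ) (hα : α = 1 / 2 + ε)
    (B : ContinuousMultilinearMap 𝕜 (fun _ : Fin 2 => lp (fun _ : ℕ => 𝕜) 2) 𝕜)
    (hBsym : ∀ x : Fin 2 → lp (fun _ : ℕ => 𝕜) 2, B (fun i => x (1 - i)) = B x)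
    (hB : ∀ x : Fin 2 → lp (fun _ : ℕ => 𝕜) 2,
      B x = ∑' j : ℕ, ((j + 1 : ℝ) ^ (-α)) •
        ((x 0 : ∀ _ : ℕ, 𝕜) j * (x 1 : ∀ _ : ℕ, 𝕜) j)) :
    IsSumming1 𝕜 ⇑B.curryLeft ∧
    ¬ IsDominated1 𝕜 2 (fun x => B fun _ => x) := by
  classical
  have h2pos : (0:ℝ) < (2:ℝ≥0∞).toReal := by norm_num
  set d : ℕ → ℝ := fun n => ((n:ℝ) + 1) ^ (-α) with hd
  have hα0 : 0 < α := by rw [hα]; linarith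
  have hdpos : ∀ n, 0 < d n := fun n => Real.rpow_pos_of_pos (by positivity) _
  have hd1 : ∀ n, d n ≤ 1 := by
    intro n
    have h1b : (1:ℝ) ≤ (n:ℝ) + 1 := by
      have := Nat.cast_nonneg (α := ℝ) n
      linarith
    calc d n = ((n:ℝ)+1) ^ (-α) := rfl
      _ ≤ ((n:ℝ)+1) ^ (0:ℝ) := Real.rpow_le_rpow_of_exponent_le h1b (by linarith)
      _ = 1 := Real.rpow_zero _
  have hsumd : Summable (fun n => d n ^ 2) := by
    have h1 : Summable (fun n : ℕ => ((n:ℝ)) ^ (-(2*α))) :=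
      Real.summable_nat_rpow.2 (by rw [hα]; linarith)
    have h2 : Summable (fun n : ℕ => (((n+1:ℕ)):ℝ) ^ (-(2*α))) :=
      (summable_nat_add_iff 1).2 h1
    refine h2.congr fun n => ?_
    have hb : (0:ℝ) ≤ (n:ℝ) + 1 := by positivity
    rw [show (((n+1:ℕ)):ℝ) = (n:ℝ) + 1 by push_cast; ring]
    simp only [hd]
    rw [← Real.rpow_natCast (((n:ℝ)+1) ^ (-α)) 2, ← Real.rpow_mul hb]
    congr 1
    push_cast
    ring
  set SD := Real.sqrt (∑' n, d n ^ 2) with hSDdef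
  have htsum0 : 0 < ∑' n, d n ^ 2 :=
    hsumd.tsum_pos (fun n => sq_nonneg _) 0 (pow_pos (hdpos 0) 2)
  have hSD0 : 0 < SD := Real.sqrt_pos.2 htsum0
  have hSDsq : SD ^ 2 = ∑' n, d n ^ 2 := Real.sq_sqrt htsum0.le
  -- summability of the weighted coordinates of any x
  have hx2 : ∀ x : lp (fun _ : ℕ => 𝕜) 2,
      Summable (fun n => (d n * ‖(x : ∀ _ : ℕ, 𝕜) n‖) ^ 2) := by
    intro x
    have hx := (lp.memℓp x).summable h2pos
    have hx' : Summable (fun n => ‖(x : ∀ _ : ℕ, 𝕜) n‖ ^ 2) :=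
      hx.congr fun n => toReal_two_pow _
    refine Summable.of_nonneg_of_le (fun n => sq_nonneg _) (fun n => ?_) hx'
    have hle : d n * ‖(x : ∀ _ : ℕ, 𝕜) n‖ ≤ ‖(x : ∀ _ : ℕ, 𝕜) n‖ :=
      mul_le_of_le_one_left (norm_nonneg _) (hd1 n)
    exact pow_le_pow_left₀ (by positivity) hle 2
  constructor
  · refine ⟨Real.sqrt 3 * SD, by positivity, ?_⟩
    intro k X r hr
    -- the curried map is dominated by the diagonal lp-norm
    have hcurry : ∀ x : lp (fun _ : ℕ => 𝕜) 2,
        ‖B.curryLeft x‖ ≤ Real.sqrt (∑' n, (d n * ‖(x : ∀ _ : ℕ, 𝕜) n‖) ^ 2) := by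
      intro x
      set ux : ∀ _ : ℕ, 𝕜 := fun n => ((d n : ℝ) : 𝕜) * (starRingEnd 𝕜) ((x : ∀ _ : ℕ, 𝕜) n)
        with hux
      have hnux : ∀ n, ‖ux n‖ = d n * ‖(x : ∀ _ : ℕ, 𝕜) n‖ := by
        intro n
        simp only [hux]
        rw [norm_mul, RCLike.norm_conj, RCLike.norm_ofReal, abs_of_pos (hdpos n)]
      have hmem : Memℓp ux 2 := memℓp_two_of_le x (fun n => by
        rw [hnux]
        exact mul_le_of_le_one_left (norm_nonneg _) (hd1 n))
      set u : lp (fun _ : ℕ => 𝕜) 2 := ⟨ux, hmem⟩ with hu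
      have hcoeu : ∀ n, (u : ∀ _ : ℕ, 𝕜) n = ux n := fun n => rfl
      have hnormu : ‖u‖ = Real.sqrt (∑' n, (d n * ‖(x : ∀ _ : ℕ, 𝕜) n‖) ^ 2) := by
        rw [← Real.sqrt_sq (norm_nonneg u), lp_norm_sq]
        congr 1
        exact tsum_congr fun n => by rw [hcoeu, hnux]
      rw [← hnormu]
      refine ContinuousMultilinearMap.opNorm_le_bound (norm_nonneg u) fun y => ?_
      have happ : (B.curryLeft x) y = B (Fin.cons x y) := rfl
      have hc0 : (Fin.cons x y : Fin 2 → lp (fun _ : ℕ => 𝕜) 2) 0 = x := rfl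
      have hc1 : (Fin.cons x y : Fin 2 → lp (fun _ : ℕ => 𝕜) 2) 1 = y 0 := rfl
      rw [happ, hB, hc0, hc1]
      have heval : (∑' j : ℕ, ((j + 1 : ℝ) ^ (-α)) •
          ((x : ∀ _ : ℕ, 𝕜) j * ((y 0 : lp (fun _ : ℕ => 𝕜) 2) : ∀ _ : ℕ, 𝕜) j))
          = (inner 𝕜 u (y 0) : 𝕜) := by
        rw [lp.inner_eq_tsum]
        refine tsum_congr fun j => ?_
        rw [RCLike.inner_apply', hcoeu]
        simp only [hux]
        rw [map_mul, RCLike.conj_conj, RCLike.conj_ofReal, RCLike.real_smul_eq_coe_mul]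
        ring
      rw [heval]
      calc ‖(inner 𝕜 u (y 0) : 𝕜)‖ ≤ ‖u‖ * ‖y 0‖ := norm_inner_le_norm _ _
        _ = ‖u‖ * ∏ i, ‖y i‖ := by rw [Fin.prod_univ_one]
    -- key finite-dimensional estimate
    have key : ∀ N : ℕ,
        ∑ j, Real.sqrt (∑ n ∈ Finset.range N, (d n * ‖((X j : lp (fun _ : ℕ => 𝕜) 2) :
          ∀ _ : ℕ, 𝕜) n‖) ^ 2) ≤ Real.sqrt 3 * SD * r := by
      intro N
      set F := Finset.range N with hF
      set coef : Finset ℕ → ℕ → 𝕜 := fun t n =>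
        (if n ∈ t then (1:𝕜) else -1) * ((d n : ℝ) : 𝕜) with hcoef
      have hcoefnorm : ∀ t n, ‖coef t n‖ = d n := by
        intro t n
        simp only [hcoef]
        rw [norm_mul, RCLike.norm_ofReal, abs_of_pos (hdpos n)]
        split_ifs <;> simp
      set c : Finset ℕ → lp (fun _ : ℕ => 𝕜) 2 :=
        fun t => ∑ n ∈ F, lp.single 2 n (coef t n) with hc
      have hcnorm : ∀ t, ‖c t‖ ≤ SD := by
        intro t
        have h1 : ‖c t‖ ^ 2 = ∑ n ∈ F, d n ^ 2 := by
          rw [hc, norm_sum_single_sq]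
          exact Finset.sum_congr rfl fun n _ => by rw [hcoefnorm]
        have h2 : ∑ n ∈ F, d n ^ 2 ≤ SD ^ 2 := by
          rw [hSDsq]
          exact hsumd.sum_le_tsum F (fun n _ => sq_nonneg _)
        have h3 : ‖c t‖ ^ 2 ≤ SD ^ 2 := h1 ▸ h2
        have h4 := Real.sqrt_le_sqrt h3
        rwa [Real.sqrt_sq (norm_nonneg _), Real.sqrt_sq hSD0.le] at h4
      have hinnerc : ∀ (t : Finset ℕ) (x : lp (fun _ : ℕ => 𝕜) 2),
          (inner 𝕜 (c t) x : 𝕜) = sgnSum (fun n => ((d n : ℝ) : 𝕜) *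
            (x : ∀ _ : ℕ, 𝕜) n) F t := by
        intro t x
        rw [hc, inner_sum_single]
        unfold sgnSum
        refine Finset.sum_congr rfl fun n _ => ?_
        simp only [hcoef]
        rw [map_mul, RCLike.conj_ofReal]
        split_ifs <;> simp <;> ring
      have ht : ∀ t ∈ F.powerset, ∑ j, ‖(inner 𝕜 (c t) (X j) : 𝕜)‖ ≤ SD * r := by
        intro t _
        have hφn : ‖((SD⁻¹ : ℝ) : 𝕜) • (innerSL 𝕜 (c t))‖ ≤ 1 := by
          calc ‖((SD⁻¹ : ℝ) : 𝕜) • (innerSL 𝕜 (c t))‖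
              ≤ ‖((SD⁻¹ : ℝ) : 𝕜)‖ * ‖innerSL 𝕜 (c t)‖ :=
                ContinuousLinearMap.opNorm_smul_le _ _
            _ = SD⁻¹ * ‖c t‖ := by
                rw [innerSL_apply_norm, RCLike.norm_ofReal,
                  abs_of_pos (by positivity : (0:ℝ) < SD⁻¹)]
            _ ≤ SD⁻¹ * SD := mul_le_mul_of_nonneg_left (hcnorm t) (by positivity)
            _ = 1 := inv_mul_cancel₀ hSD0.ne'
        have hrφ := hr (((SD⁻¹ : ℝ) : 𝕜) • (innerSL 𝕜 (c t))) hφn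
        have happ : ∀ j, ‖(((SD⁻¹ : ℝ) : 𝕜) • (innerSL 𝕜 (c t))) (X j)‖
            = SD⁻¹ * ‖(inner 𝕜 (c t) (X j) : 𝕜)‖ := by
          intro j
          rw [ContinuousLinearMap.smul_apply, norm_smul, RCLike.norm_ofReal,
            abs_of_pos (by positivity : (0:ℝ) < SD⁻¹)]
          rfl
        rw [Finset.sum_congr rfl (fun j _ => happ j), ← Finset.mul_sum] at hrφ
        calc ∑ j, ‖(inner 𝕜 (c t) (X j) : 𝕜)‖
            = SD * (SD⁻¹ * ∑ j, ‖(inner 𝕜 (c t) (X j) : 𝕜)‖) := by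
              rw [← mul_assoc, mul_inv_cancel₀ hSD0.ne', one_mul]
          _ ≤ SD * r := mul_le_mul_of_nonneg_left hrφ hSD0.le
      have hkj : ∀ j, (2:ℝ) ^ N * Real.sqrt (∑ n ∈ F,
          (d n * ‖((X j : lp (fun _ : ℕ => 𝕜) 2) : ∀ _ : ℕ, 𝕜) n‖) ^ 2)
          ≤ Real.sqrt 3 * ∑ t ∈ F.powerset, ‖(inner 𝕜 (c t) (X j) : 𝕜)‖ := by
        intro j
        have hk := khintchine (fun n => ((d n : ℝ) : 𝕜) *
          ((X j : lp (fun _ : ℕ => 𝕜) 2) : ∀ _ : ℕ, 𝕜) n) F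
        have hcard : F.card = N := by rw [hF, Finset.card_range]
        rw [hcard] at hk
        have e1 : ∀ n ∈ F, ‖((d n : ℝ) : 𝕜) * ((X j : lp (fun _ : ℕ => 𝕜) 2) :
            ∀ _ : ℕ, 𝕜) n‖ ^ 2 = (d n * ‖((X j : lp (fun _ : ℕ => 𝕜) 2) :
            ∀ _ : ℕ, 𝕜) n‖) ^ 2 := by
          intro n _
          rw [norm_mul, RCLike.norm_ofReal, abs_of_pos (hdpos n)]
        have e2 : ∀ t ∈ F.powerset, ‖sgnSum (fun n => ((d n : ℝ) : 𝕜) *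
            ((X j : lp (fun _ : ℕ => 𝕜) 2) : ∀ _ : ℕ, 𝕜) n) F t‖
            = ‖(inner 𝕜 (c t) (X j) : 𝕜)‖ := fun t _ => by rw [hinnerc]
        rw [Finset.sum_congr rfl e1, Finset.sum_congr rfl e2] at hk
        exact hk
      have hsum2 : (2:ℝ) ^ N * ∑ j, Real.sqrt (∑ n ∈ F,
          (d n * ‖((X j : lp (fun _ : ℕ => 𝕜) 2) : ∀ _ : ℕ, 𝕜) n‖) ^ 2)
          ≤ Real.sqrt 3 * ∑ t ∈ F.powerset, ∑ j, ‖(inner 𝕜 (c t) (X j) : 𝕜)‖ := by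
        calc (2:ℝ) ^ N * ∑ j, Real.sqrt (∑ n ∈ F,
              (d n * ‖((X j : lp (fun _ : ℕ => 𝕜) 2) : ∀ _ : ℕ, 𝕜) n‖) ^ 2)
            = ∑ j, (2:ℝ) ^ N * Real.sqrt (∑ n ∈ F,
              (d n * ‖((X j : lp (fun _ : ℕ => 𝕜) 2) : ∀ _ : ℕ, 𝕜) n‖) ^ 2) :=
              Finset.mul_sum _ _ _
          _ ≤ ∑ j, Real.sqrt 3 * ∑ t ∈ F.powerset, ‖(inner 𝕜 (c t) (X j) : 𝕜)‖ :=
              Finset.sum_le_sum fun j _ => hkj j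
          _ = Real.sqrt 3 * ∑ j, ∑ t ∈ F.powerset, ‖(inner 𝕜 (c t) (X j) : 𝕜)‖ :=
              (Finset.mul_sum _ _ _).symm
          _ = Real.sqrt 3 * ∑ t ∈ F.powerset, ∑ j, ‖(inner 𝕜 (c t) (X j) : 𝕜)‖ := by
              rw [Finset.sum_comm]
      have hsum3 : ∑ t ∈ F.powerset, ∑ j, ‖(inner 𝕜 (c t) (X j) : 𝕜)‖
          ≤ (2:ℝ) ^ N * (SD * r) := by
        calc ∑ t ∈ F.powerset, ∑ j, ‖(inner 𝕜 (c t) (X j) : 𝕜)‖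
            ≤ ∑ _t ∈ F.powerset, SD * r := Finset.sum_le_sum ht
          _ = (2:ℝ) ^ N * (SD * r) := by
              rw [Finset.sum_const, Finset.card_powerset, hF, Finset.card_range,
                nsmul_eq_mul]
              push_cast
              ring
      have hfinal := hsum2.trans (mul_le_mul_of_nonneg_left hsum3 (Real.sqrt_nonneg 3))
      have h2N : (0:ℝ) < 2 ^ N := by positivity
      rw [show Real.sqrt 3 * ((2:ℝ) ^ N * (SD * r)) =
        (2:ℝ) ^ N * (Real.sqrt 3 * SD * r) by ring] at hfinal
      exact le_of_mul_le_mul_left hfinal h2N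
    -- pass to the limit in N
    have hlim : Tendsto (fun N => ∑ j, Real.sqrt (∑ n ∈ Finset.range N,
        (d n * ‖((X j : lp (fun _ : ℕ => 𝕜) 2) : ∀ _ : ℕ, 𝕜) n‖) ^ 2)) atTop
        (nhds (∑ j, Real.sqrt (∑' n,
        (d n * ‖((X j : lp (fun _ : ℕ => 𝕜) 2) : ∀ _ : ℕ, 𝕜) n‖) ^ 2))) := by
      refine tendsto_finset_sum _ fun j _ => ?_
      exact (Real.continuous_sqrt.tendsto _).comp ((hx2 (X j)).hasSum.tendsto_sum_nat)
    have hfin : ∑ j, Real.sqrt (∑' n,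
        (d n * ‖((X j : lp (fun _ : ℕ => 𝕜) 2) : ∀ _ : ℕ, 𝕜) n‖) ^ 2)
        ≤ Real.sqrt 3 * SD * r :=
      le_of_tendsto hlim (Filter.Eventually.of_forall key)
    calc ∑ j, ‖B.curryLeft (X j)‖
        ≤ ∑ j, Real.sqrt (∑' n,
          (d n * ‖((X j : lp (fun _ : ℕ => 𝕜) 2) : ∀ _ : ℕ, 𝕜) n‖) ^ 2) :=
          Finset.sum_le_sum fun j _ => hcurry (X j)
      _ ≤ Real.sqrt 3 * SD * r := hfin
  · rintro ⟨C, μ, hC0, hprob, hreg, hdom⟩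
    haveI := hprob
    set e : ℕ → lp (fun _ : ℕ => 𝕜) 2 := fun j => lp.single 2 j (1:𝕜) with he
    have hcoord : ∀ j n : ℕ, ((e j : lp (fun _ : ℕ => 𝕜) 2) : ∀ _ : ℕ, 𝕜) n
        = if n = j then 1 else 0 := by
      intro j n
      by_cases h : n = j
      · subst h
        simp [he, lp.single_apply_self]
      · simp only [he, lp.single_apply_ne 2 j _ h, if_neg h]
    have hP : ∀ j, ‖B (fun _ => e j)‖ = d j := by
      intro j
      rw [hB]
      have hts : (∑' n : ℕ, ((n + 1 : ℝ) ^ (-α)) •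
          ((((fun _ => e j) : Fin 2 → lp (fun _ : ℕ => 𝕜) 2) 0 : ∀ _ : ℕ, 𝕜) n *
           (((fun _ => e j) : Fin 2 → lp (fun _ : ℕ => 𝕜) 2) 1 : ∀ _ : ℕ, 𝕜) n))
          = ((d j : ℝ) : 𝕜) := by
        rw [tsum_eq_single j ?_]
        · rw [hcoord, if_pos rfl, mul_one, RCLike.real_smul_eq_coe_mul, mul_one]
        · intro n hn
          rw [hcoord, if_neg hn, zero_mul, smul_zero]
      rw [hts, RCLike.norm_ofReal, abs_of_pos (hdpos j)]
    have hsq : ∀ (φ : WeakDual 𝕜 (lp (fun _ : ℕ => 𝕜) 2)), (∀ x, ‖φ x‖ ≤ ‖x‖) →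
        ∀ k : ℕ, ∑ j ∈ Finset.range k, ‖φ (e j)‖ ^ 2 ≤ 1 := by
      intro φ hφ k
      set S := ∑ j ∈ Finset.range k, ‖φ (e j)‖ ^ 2 with hS
      have hS0 : 0 ≤ S := Finset.sum_nonneg fun j _ => sq_nonneg _
      set y := ∑ j ∈ Finset.range k, lp.single (E := fun _ : ℕ => 𝕜) 2 j
        ((starRingEnd 𝕜) (φ (e j))) with hy
      have hyn : ‖y‖ ^ 2 = S := by
        rw [hy, norm_sum_single_sq, hS]
        exact Finset.sum_congr rfl fun j _ => by rw [RCLike.norm_conj]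
      have hφy : φ y = ((S : ℝ) : 𝕜) := by
        rw [hy, map_sum]
        have hterm : ∀ j ∈ Finset.range k,
            φ (lp.single (E := fun _ : ℕ => 𝕜) 2 j ((starRingEnd 𝕜) (φ (e j))))
            = ((‖φ (e j)‖ ^ 2 : ℝ) : 𝕜) := by
          intro j _
          have h1 : lp.single (E := fun _ : ℕ => 𝕜) 2 j ((starRingEnd 𝕜) (φ (e j)))
              = (starRingEnd 𝕜) (φ (e j)) • e j := by
            rw [he]
            rw [← lp.single_smul, smul_eq_mul, mul_one]
          rw [h1, _root_.map_smul, smul_eq_mul, RCLike.conj_mul]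
          norm_cast
        rw [Finset.sum_congr rfl hterm, hS]
        push_cast
        ring
      have hsle : S ≤ Real.sqrt S := by
        have h1 : ‖φ y‖ ≤ ‖y‖ := hφ y
        rw [hφy, RCLike.norm_ofReal, abs_of_nonneg hS0] at h1
        have h2 : ‖y‖ = Real.sqrt S := by
          rw [← hyn, Real.sqrt_sq (norm_nonneg _)]
        rwa [h2] at h1
      nlinarith [Real.sq_sqrt hS0, Real.sqrt_nonneg S,
        mul_self_le_mul_self hS0 hsle]
    have hmeas : ∀ x : lp (fun _ : ℕ => 𝕜) 2, Continuous
        (fun φ : dualBall 𝕜 (lp (fun _ : ℕ => 𝕜) 2) =>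
          ‖(φ : WeakDual 𝕜 (lp (fun _ : ℕ => 𝕜) 2)) x‖) :=
      fun x => ((WeakDual.eval_continuous x).comp continuous_subtype_val).norm
    have hint : ∀ x : lp (fun _ : ℕ => 𝕜) 2, Integrable
        (fun φ : dualBall 𝕜 (lp (fun _ : ℕ => 𝕜) 2) =>
          ‖(φ : WeakDual 𝕜 (lp (fun _ : ℕ => 𝕜) 2)) x‖) μ := by
      intro x
      refine Integrable.mono' (integrable_const ‖x‖) (hmeas x).aestronglyMeasurable
        (Filter.Eventually.of_forall fun φ => ?_)
      rw [norm_norm]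
      exact φ.2 x
    set I : ℕ → ℝ := fun j => ∫ φ, ‖(φ : WeakDual 𝕜 (lp (fun _ : ℕ => 𝕜) 2)) (e j)‖ ∂μ
      with hI
    have hI0 : ∀ j, 0 ≤ I j := fun j => integral_nonneg fun φ => norm_nonneg _
    have hstep : ∀ j, Real.sqrt (d j) ≤ Real.sqrt C * I j := by
      intro j
      have h1 := hdom (e j)
      rw [hP j] at h1
      calc Real.sqrt (d j) ≤ Real.sqrt (C * I j ^ 2) := Real.sqrt_le_sqrt h1
        _ = Real.sqrt C * Real.sqrt (I j ^ 2) := Real.sqrt_mul hC0 _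
        _ = Real.sqrt C * I j := by rw [Real.sqrt_sq (hI0 j)]
    have hup : ∀ k : ℕ, ∑ j ∈ Finset.range k, I j ≤ Real.sqrt k := by
      intro k
      have hptw : ∀ φ : dualBall 𝕜 (lp (fun _ : ℕ => 𝕜) 2),
          ∑ j ∈ Finset.range k, ‖(φ : WeakDual 𝕜 (lp (fun _ : ℕ => 𝕜) 2)) (e j)‖
          ≤ Real.sqrt k := by
        intro φ
        have h1 := sq_sum_le_card_mul_sum_sq (s := Finset.range k)
          (f := fun j => ‖(φ : WeakDual 𝕜 (lp (fun _ : ℕ => 𝕜) 2)) (e j)‖)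
        have h2 := hsq (φ : WeakDual 𝕜 (lp (fun _ : ℕ => 𝕜) 2)) (fun x => φ.2 x) k
        have h3 : (∑ j ∈ Finset.range k,
            ‖(φ : WeakDual 𝕜 (lp (fun _ : ℕ => 𝕜) 2)) (e j)‖) ^ 2 ≤ (k : ℝ) := by
          calc (∑ j ∈ Finset.range k,
              ‖(φ : WeakDual 𝕜 (lp (fun _ : ℕ => 𝕜) 2)) (e j)‖) ^ 2
              ≤ (Finset.range k).card * ∑ j ∈ Finset.range k,
                ‖(φ : WeakDual 𝕜 (lp (fun _ : ℕ => 𝕜) 2)) (e j)‖ ^ 2 := h1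
            _ ≤ (k : ℝ) * 1 := by
                rw [Finset.card_range]
                exact mul_le_mul_of_nonneg_left h2 (Nat.cast_nonneg k)
            _ = (k : ℝ) := mul_one _
        have h4 : (0:ℝ) ≤ ∑ j ∈ Finset.range k,
            ‖(φ : WeakDual 𝕜 (lp (fun _ : ℕ => 𝕜) 2)) (e j)‖ :=
          Finset.sum_nonneg fun j _ => norm_nonneg _
        calc ∑ j ∈ Finset.range k, ‖(φ : WeakDual 𝕜 (lp (fun _ : ℕ => 𝕜) 2)) (e j)‖
            = Real.sqrt ((∑ j ∈ Finset.range k,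
              ‖(φ : WeakDual 𝕜 (lp (fun _ : ℕ => 𝕜) 2)) (e j)‖) ^ 2) :=
              (Real.sqrt_sq h4).symm
          _ ≤ Real.sqrt k := Real.sqrt_le_sqrt h3
      calc ∑ j ∈ Finset.range k, I j
          = ∫ φ, (∑ j ∈ Finset.range k,
            ‖(φ : WeakDual 𝕜 (lp (fun _ : ℕ => 𝕜) 2)) (e j)‖) ∂μ :=
            (integral_finset_sum _ fun j _ => hint (e j)).symm
        _ ≤ ∫ _φ, Real.sqrt k ∂μ :=
            integral_mono (integrable_finset_sum _ fun j _ => hint (e j))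
              (integrable_const _) (fun φ => hptw φ)
        _ = Real.sqrt k := by simp
    have hchain : ∀ k : ℕ, (k:ℝ) * (k:ℝ) ^ (-(α/2)) ≤ Real.sqrt C * Real.sqrt k := by
      intro k
      rcases Nat.eq_zero_or_pos k with hk0 | hkpos
      · subst hk0
        simp only [Nat.cast_zero, zero_mul]
        positivity
      · have hklb : ∀ j ∈ Finset.range k, (k:ℝ) ^ (-(α/2)) ≤ Real.sqrt (d j) := by
          intro j hj
          have hjk : (j:ℝ) + 1 ≤ (k:ℝ) := by
            exact_mod_cast Nat.succ_le_of_lt (Finset.mem_range.1 hj)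
          have hkpos' : (0:ℝ) < (k:ℝ) := by positivity
          have hdk : (k:ℝ) ^ (-α) ≤ d j := by
            simp only [hd]
            rw [Real.rpow_neg hkpos'.le, Real.rpow_neg (by positivity : (0:ℝ) ≤ (j:ℝ)+1)]
            refine inv_anti₀ (Real.rpow_pos_of_pos (by positivity) α) ?_
            exact Real.rpow_le_rpow (by positivity) hjk hα0.le
          have hsqk : Real.sqrt ((k:ℝ) ^ (-α)) = (k:ℝ) ^ (-(α/2)) := by
            rw [show (k:ℝ) ^ (-α) = ((k:ℝ) ^ (-(α/2))) ^ 2 by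
              rw [← Real.rpow_natCast ((k:ℝ) ^ (-(α/2))) 2,
                ← Real.rpow_mul (Nat.cast_nonneg k)]
              congr 1
              push_cast
              ring]
            exact Real.sqrt_sq (Real.rpow_nonneg (Nat.cast_nonneg k) _)
          calc (k:ℝ) ^ (-(α/2)) = Real.sqrt ((k:ℝ) ^ (-α)) := hsqk.symm
            _ ≤ Real.sqrt (d j) := Real.sqrt_le_sqrt hdk
        calc (k:ℝ) * (k:ℝ) ^ (-(α/2))
            = ∑ _j ∈ Finset.range k, (k:ℝ) ^ (-(α/2)) := by
              rw [Finset.sum_const, Finset.card_range, nsmul_eq_mul]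
          _ ≤ ∑ j ∈ Finset.range k, Real.sqrt (d j) := Finset.sum_le_sum hklb
          _ ≤ ∑ j ∈ Finset.range k, (Real.sqrt C * I j) :=
              Finset.sum_le_sum fun j _ => hstep j
          _ = Real.sqrt C * ∑ j ∈ Finset.range k, I j := (Finset.mul_sum _ _ _).symm
          _ ≤ Real.sqrt C * Real.sqrt k :=
              mul_le_mul_of_nonneg_left (hup k) (Real.sqrt_nonneg C)
    have hδ : (0:ℝ) < 1/4 - ε/2 := by linarith
    have htend : Tendsto (fun k : ℕ => (k:ℝ) ^ (1/4 - ε/2)) atTop atTop :=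
      (tendsto_rpow_atTop hδ).comp tendsto_natCast_atTop_atTop
    obtain ⟨k, hkone, hkgt⟩ : ∃ k : ℕ, 1 ≤ k ∧ Real.sqrt C < (k:ℝ) ^ (1/4 - ε/2) := by
      rcases ((htend.eventually_gt_atTop (Real.sqrt C)).and
        (Filter.eventually_ge_atTop 1)).exists with ⟨k, hk⟩
      exact ⟨k, hk.2, hk.1⟩
    have hkpos : (0:ℝ) < (k:ℝ) := by exact_mod_cast hkone
    have hle : (k:ℝ) ^ (1/4 - ε/2) ≤ Real.sqrt C := by
      have h := hchain k
      have hL : (k:ℝ) * (k:ℝ) ^ (-(α/2)) = (k:ℝ) ^ (1 - α/2) := by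
        nth_rewrite 1 [← Real.rpow_one (k:ℝ)]
        rw [← Real.rpow_add hkpos, show (1:ℝ) + -(α/2) = 1 - α/2 by ring]
      have hR : (k:ℝ) ^ (1/4 - ε/2) * (k:ℝ) ^ ((1:ℝ)/2) = (k:ℝ) ^ (1 - α/2) := by
        rw [← Real.rpow_add hkpos, show 1/4 - ε/2 + (1:ℝ)/2 = 1 - α/2 by rw [hα]; ring]
      rw [hL, Real.sqrt_eq_rpow (k:ℝ), ← hR] at h
      exact le_of_mul_le_mul_right h (Real.rpow_pos_of_pos hkpos _)
    exact absurd hle (not_le.2 hkgt)
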